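/- If two endomorphisms of finitely generated free abelian groups (equivalently, integer square matrices) φ and ψ are shift equivalent, then tr(φ^n) = tr(ψ^n) for all n ≥ 1. -/

import Mathlib

open LinearMap Filter

section Aux

variable {K V W : Type*} [Field K]
  [AddCommGroup V] [Module K V] [FiniteDimensional K V]
  [AddCommGroup W] [Module K W] [FiniteDimensional K W]

private lemma intertwine_pow {f : Module.End K V} {g : Module.End K W} {r : V →ₗ[K] W}
    (h1 : r ∘ₗ (f : V →ₗ[K] V) = (g : W →ₗ[K] W) ∘ₗ r) (m : ℕ) :
    r ∘ₗ ((f ^ m : Module.End K V) : V →ₗ[K] V)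
      = ((g ^ m : Module.End K W) : W →ₗ[K] W) ∘ₗ r := by
  induction m with
  | zero => rfl
  | succ m ih =>
      rw [pow_succ, pow_succ, Module.End.mul_eq_comp, Module.End.mul_eq_comp,
        ← comp_assoc, ih, comp_assoc, h1, ← comp_assoc]

private lemma trace_split (p q : Submodule K V) (h : IsCompl p q) (f : Module.End K V)
    (hp : Set.MapsTo f p p) (hq : Set.MapsTo f q q) :
    trace K V f = trace K p (f.restrict hp) + trace K q (f.restrict hq) := by
  have hint : DirectSum.IsInternal (fun b : Bool => cond b p q) := by
    rw [DirectSum.isInternal_submodule_iff_isCompl _ (i := true) (j := false) (by simp)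
      (by ext x; simp)]
    exact h
  have hmaps : ∀ b : Bool, Set.MapsTo f ((cond b p q : Submodule K V) : Set V)
      ((cond b p q : Submodule K V) : Set V) := by
    intro b; cases b
    · exact hq
    · exact hp
  rw [trace_eq_sum_trace_restrict hint hmaps, Fintype.sum_bool]
  rfl

private lemma key (f : Module.End K V) (g : Module.End K W)
    (r : V →ₗ[K] W) (s : W →ₗ[K] V) (k : ℕ)
    (h1 : r ∘ₗ (f : V →ₗ[K] V) = (g : W →ₗ[K] W) ∘ₗ r)
    (h2 : s ∘ₗ (g : W →ₗ[K] W) = (f : V →ₗ[K] V) ∘ₗ s)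
    (h3 : r ∘ₗ s = (g ^ k : Module.End K W))
    (h4 : s ∘ₗ r = (f ^ k : Module.End K V))
    (n : ℕ) (hn : 1 ≤ n) :
    trace K V ((f ^ n : Module.End K V) : V →ₗ[K] V)
      = trace K W ((g ^ n : Module.End K W) : W →ₗ[K] W) := by
  obtain ⟨N, hN⟩ := Filter.eventually_atTop.mp
    (((f.eventually_isCompl_ker_pow_range_pow.and
      g.eventually_isCompl_ker_pow_range_pow).and
      (f.eventually_iInf_range_pow_eq.and g.eventually_iInf_range_pow_eq)).and
      ((eventually_ge_atTop k).and (eventually_ge_atTop 1)))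
  obtain ⟨⟨⟨hcf, hcg⟩, ⟨hif, hig⟩⟩, hkN, h1N⟩ := hN N le_rfl
  have hrangef : ∀ m, N ≤ m → range ((f ^ m : Module.End K V) : V →ₗ[K] V)
      = range ((f ^ N : Module.End K V) : V →ₗ[K] V) := by
    intro m hm
    rw [← ((hN m hm).1.2.1 : _ = range ((f ^ m : Module.End K V) : V →ₗ[K] V)), hif]
  have hrangeg : ∀ m, N ≤ m → range ((g ^ m : Module.End K W) : W →ₗ[K] W)
      = range ((g ^ N : Module.End K W) : W →ₗ[K] W) := by
    intro m hm
    rw [← ((hN m hm).1.2.2 : _ = range ((g ^ m : Module.End K W) : W →ₗ[K] W)), hig]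
  set K₁ := ker ((f ^ N : Module.End K V) : V →ₗ[K] V) with hK₁
  set I₁ := range ((f ^ N : Module.End K V) : V →ₗ[K] V) with hI₁
  set K₂ := ker ((g ^ N : Module.End K W) : W →ₗ[K] W) with hK₂
  set I₂ := range ((g ^ N : Module.End K W) : W →ₗ[K] W) with hI₂
  -- maps-to facts
  have hfK : ∀ m : ℕ, Set.MapsTo (f ^ m : Module.End K V) K₁ K₁ := by
    intro m x hx
    have hx' : (f ^ N) x = 0 := hx
    show (f ^ N) ((f ^ m) x) = 0
    rw [← Module.End.mul_apply, ← pow_add, add_comm, pow_add, Module.End.mul_apply, hx',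
      map_zero]
  have hgK : ∀ m : ℕ, Set.MapsTo (g ^ m : Module.End K W) K₂ K₂ := by
    intro m x hx
    have hx' : (g ^ N) x = 0 := hx
    show (g ^ N) ((g ^ m) x) = 0
    rw [← Module.End.mul_apply, ← pow_add, add_comm, pow_add, Module.End.mul_apply, hx',
      map_zero]
  have hfI : ∀ m : ℕ, Set.MapsTo (f ^ m : Module.End K V) I₁ I₁ := by
    rintro m x ⟨y, rfl⟩
    exact ⟨(f ^ m) y, by
      rw [← Module.End.mul_apply, ← pow_add, add_comm, pow_add, Module.End.mul_apply]⟩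
  have hgI : ∀ m : ℕ, Set.MapsTo (g ^ m : Module.End K W) I₂ I₂ := by
    rintro m x ⟨y, rfl⟩
    exact ⟨(g ^ m) y, by
      rw [← Module.End.mul_apply, ← pow_add, add_comm, pow_add, Module.End.mul_apply]⟩
  -- the nilpotent parts contribute no trace
  have hnilf : trace K K₁ ((f ^ n : Module.End K V).restrict (hfK n)) = 0 := by
    have hzero : ((f ^ n : Module.End K V).restrict (hfK n)) ^ N = 0 := by
      rw [Module.End.pow_restrict N (hfK n)]
      ext ⟨x, hx⟩
      have hx' : (f ^ N) x = 0 := hx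
      have hNle : N ≤ n * N := Nat.le_mul_of_pos_left N hn
      simp only [LinearMap.restrict_apply, LinearMap.zero_apply, ZeroMemClass.coe_zero]
      rw [← pow_mul, ← Nat.sub_add_cancel hNle, pow_add, Module.End.mul_apply, hx', map_zero]
    have : IsNilpotent (trace K K₁ ((f ^ n : Module.End K V).restrict (hfK n))) :=
      isNilpotent_trace_of_isNilpotent ⟨N, hzero⟩
    exact this.eq_zero
  have hnilg : trace K K₂ ((g ^ n : Module.End K W).restrict (hgK n)) = 0 := by
    have hzero : ((g ^ n : Module.End K W).restrict (hgK n)) ^ N = 0 := by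
      rw [Module.End.pow_restrict N (hgK n)]
      ext ⟨x, hx⟩
      have hx' : (g ^ N) x = 0 := hx
      have hNle : N ≤ n * N := Nat.le_mul_of_pos_left N hn
      simp only [LinearMap.restrict_apply, LinearMap.zero_apply, ZeroMemClass.coe_zero]
      rw [← pow_mul, ← Nat.sub_add_cancel hNle, pow_add, Module.End.mul_apply, hx', map_zero]
    have : IsNilpotent (trace K K₂ ((g ^ n : Module.End K W).restrict (hgK n))) :=
      isNilpotent_trace_of_isNilpotent ⟨N, hzero⟩
    exact this.eq_zero
  -- r restricts to an isomorphism I₁ ≃ I₂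
  have hrI : Set.MapsTo r I₁ I₂ := by
    rintro x ⟨y, rfl⟩
    exact ⟨r y, (LinearMap.ext_iff.mp (intertwine_pow h1 N) y).symm⟩
  have hsI : Set.MapsTo s I₂ I₁ := by
    rintro x ⟨y, rfl⟩
    exact ⟨s y, (LinearMap.ext_iff.mp (intertwine_pow h2 N) y).symm⟩
  have hinj : Function.Injective (r.restrict hrI) := by
    rw [injective_iff_map_eq_zero]
    rintro ⟨x, hx⟩ h0
    have hrx : r x = 0 := congrArg Subtype.val h0
    have hfkx : (f ^ k) x = 0 := by
      rw [← h4]; simp [hrx]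
    have hfNx : (f ^ N) x = 0 := by
      rw [← Nat.sub_add_cancel hkN, pow_add, Module.End.mul_apply, hfkx, map_zero]
    have : x = 0 := Submodule.disjoint_def.mp hcf.1 x hfNx hx
    exact Subtype.ext this
  have hsurj : Function.Surjective (r.restrict hrI) := by
    rintro ⟨y, hy⟩
    have hy' : y ∈ range ((g ^ (N + k) : Module.End K W) : W →ₗ[K] W) := by
      rw [hrangeg (N + k) (Nat.le_add_right N k)]; exact hy
    obtain ⟨z, hz⟩ := hy'
    have hgz : (g ^ N) z ∈ I₂ := ⟨z, rfl⟩
    refine ⟨⟨s ((g ^ N) z), hsI hgz⟩, Subtype.ext ?_⟩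
    show r (s ((g ^ N) z)) = y
    have : (r ∘ₗ s) ((g ^ N) z) = (g ^ k) ((g ^ N) z) := by rw [h3]
    rw [LinearMap.comp_apply] at this
    rw [this, ← Module.End.mul_apply, ← pow_add, add_comm k N, hz]
  let e : I₁ ≃ₗ[K] I₂ := LinearEquiv.ofBijective (r.restrict hrI) ⟨hinj, hsurj⟩
  have hconj : e.conj ((f ^ n : Module.End K V).restrict (hfI n))
      = (g ^ n : Module.End K W).restrict (hgI n) := by
    apply LinearMap.ext
    intro x
    obtain ⟨y, rfl⟩ := e.surjective x
    rw [LinearEquiv.conj_apply, LinearMap.comp_apply, LinearMap.comp_apply,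
      LinearEquiv.coe_coe, LinearEquiv.coe_coe, e.symm_apply_apply]
    apply Subtype.ext
    show r ((f ^ n) (y : V)) = (g ^ n) (r (y : V))
    exact LinearMap.ext_iff.mp (intertwine_pow h1 n) (y : V)
  have htr : trace K I₁ ((f ^ n : Module.End K V).restrict (hfI n))
      = trace K I₂ ((g ^ n : Module.End K W).restrict (hgI n)) := by
    rw [← hconj, trace_conj']
  rw [trace_split K₁ I₁ hcf (f ^ n) (hfK n) (hfI n),
    trace_split K₂ I₂ hcg (g ^ n) (hgK n) (hgI n), hnilf, hnilg, htr]

end Aux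

/-- Shift equivalent endomorphisms of finitely generated free abelian groups
(integer matrices) have equal traces of all positive powers. -/
theorem trace_pow_eq_of_shiftEquivalent (a b : ℕ)
    (φ : Module.End ℤ (Fin a → ℤ)) (ψ : Module.End ℤ (Fin b → ℤ))
    (r : (Fin a → ℤ) →ₗ[ℤ] (Fin b → ℤ)) (s : (Fin b → ℤ) →ₗ[ℤ] (Fin a → ℤ))
    (k : ℕ) (hk : 1 ≤ k)
    (h1 : r ∘ₗ (φ : (Fin a → ℤ) →ₗ[ℤ] (Fin a → ℤ)) = (ψ : (Fin b → ℤ) →ₗ[ℤ] (Fin b → ℤ)) ∘ₗ r)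
    (h2 : s ∘ₗ (ψ : (Fin b → ℤ) →ₗ[ℤ] (Fin b → ℤ)) = (φ : (Fin a → ℤ) →ₗ[ℤ] (Fin a → ℤ)) ∘ₗ s)
    (h3 : r ∘ₗ s = (ψ ^ k : Module.End ℤ (Fin b → ℤ)))
    (h4 : s ∘ₗ r = (φ ^ k : Module.End ℤ (Fin a → ℤ))) :
    ∀ n : ℕ, 1 ≤ n →
      LinearMap.trace ℤ (Fin a → ℤ) (φ ^ n) = LinearMap.trace ℤ (Fin b → ℤ) (ψ ^ n) := by
  intro n hn
  have hmain := key (K := ℚ) (φ.baseChange ℚ) (ψ.baseChange ℚ) (r.baseChange ℚ)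
    (s.baseChange ℚ) k
    (by rw [← LinearMap.baseChange_comp, h1, LinearMap.baseChange_comp])
    (by rw [← LinearMap.baseChange_comp, h2, LinearMap.baseChange_comp])
    (by rw [← LinearMap.baseChange_comp, h3, LinearMap.baseChange_pow])
    (by rw [← LinearMap.baseChange_comp, h4, LinearMap.baseChange_pow])
    n hn
  rw [← LinearMap.baseChange_pow, ← LinearMap.baseChange_pow, trace_baseChange,
    trace_baseChange] at hmain
  exact_mod_cast hmain
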